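/- Let 1 → K → G → H → 1 be an exact sequence of groups in which K is finite (equivalently, there is a surjective homomorphism G → H with finite kernel K). Then H is almost abelian of rank r if and only if G is almost abelian of rank r. -/

import Mathlib

/-- A group is finite if it admits a homomorphism to a finite group with finite kernel. -/
lemma finite_of_finite_ker_of_finite_codom {A B : Type*} [Group A] [Group B]
    (ψ : A →* B) [Finite B] (hk : Finite ψ.ker) : Finite A := by
  haveI : Finite ψ.range := Subtype.finite
  haveI : Finite (A ⧸ ψ.ker) :=
    Finite.of_equiv _ (QuotientGroup.quotientKerEquivRange ψ).symm.toEquiv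
  exact Finite.of_subgroup_quotient (H := ψ.ker)

/-- The preimage of a finite subgroup under a homomorphism with finite kernel is finite. -/
lemma finite_comap_of_finite_ker {A B : Type*} [Group A] [Group B]
    (ψ : A →* B) (hk : Finite ψ.ker) (S : Subgroup B) (hS : Finite S) :
    Finite (S.comap ψ) := by
  let ψ' : (S.comap ψ) →* S :=
    (ψ.domRestrict (S.comap ψ)).codRestrict S (fun x => x.2)
  have hker' : Finite ψ'.ker := by
    refine Finite.of_injective (fun x => (⟨x.1.1, ?_⟩ : ψ.ker)) ?_
    · have := x.2
      rw [MonoidHom.mem_ker] at this ⊢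
      exact congrArg Subtype.val this
    · intro x y hxy
      have h1 := congrArg Subtype.val hxy
      exact Subtype.ext (Subtype.ext h1)
  exact finite_of_finite_ker_of_finite_codom ψ' hker'

/-- Elements of finite order in `Multiplicative (Fin r → ℤ)` are trivial. -/
lemma mul_int_torsion_free {r : ℕ} (y : Multiplicative (Fin r → ℤ)) {n : ℕ}
    (hn : n ≠ 0) (h : y ^ n = 1) : y = 1 := by
  have h' : n • y.toAdd = 0 := by
    have := congrArg Multiplicative.toAdd h
    simpa [toAdd_pow] using this
  have hz : y.toAdd = 0 := by
    funext i
    have := congrFun h' i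
    simp only [Pi.smul_apply, Pi.zero_apply, nsmul_eq_mul] at this
    exact (mul_eq_zero.1 this).resolve_left (by exact_mod_cast hn)
  exact Multiplicative.toAdd.injective (by simpa using hz)

/-- A group `G` is almost abelian of rank `r` if there is a normal subgroup `G⁰` of
finite index and an exact sequence `1 → K → G⁰ → ℤ^r → 0` with `K` finite. -/
def IsAlmostAbelianOfRank (G : Type*) [Group G] (r : ℕ) : Prop :=
  ∃ G0 : Subgroup G, G0.Normal ∧ G0.FiniteIndex ∧
    ∃ f : G0 →* Multiplicative (Fin r → ℤ), Function.Surjective f ∧ Finite f.ker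

/-- If `G → H` is a surjective group homomorphism with finite kernel `K` (i.e. there is an
exact sequence `1 → K → G → H → 1` with `K` finite), then `H` is almost abelian of rank
`r` iff `G` is. -/
theorem almost_abelian_iff_of_finite_kernel
    {G H : Type*} [Group G] [Group H] (f : G →* H) (hf : Function.Surjective f)
    (hker : Finite f.ker) (r : ℕ) :
    IsAlmostAbelianOfRank H r ↔ IsAlmostAbelianOfRank G r := by
  constructor
  · rintro ⟨H0, hn, hfi, g, hgs, hgk⟩
    refine ⟨H0.comap f, hn.comap f, ?_, ?_⟩
    · exact ⟨by rw [H0.index_comap_of_surjective hf]; exact hfi.index_ne_zero⟩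
    · -- the restriction of `f` to the preimage, with codomain `H0`
      let p : (H0.comap f) →* H0 :=
        (f.domRestrict (H0.comap f)).codRestrict H0 (fun x => x.2)
      have hps : Function.Surjective p := by
        rintro ⟨h, hh⟩
        obtain ⟨x, hx⟩ := hf h
        exact ⟨⟨x, by simpa [Subgroup.mem_comap, hx] using hh⟩, Subtype.ext hx⟩
      have hpk : Finite p.ker := by
        refine Finite.of_injective (fun x => (⟨x.1.1, ?_⟩ : f.ker)) ?_
        · have := x.2
          rw [MonoidHom.mem_ker] at this ⊢
          exact congrArg Subtype.val this
        · intro x y hxy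
          have h1 := congrArg Subtype.val hxy
          exact Subtype.ext (Subtype.ext h1)
      refine ⟨g.comp p, hgs.comp hps, ?_⟩
      have heq : (g.comp p).ker = g.ker.comap p := (MonoidHom.comap_ker g p).symm
      rw [heq]
      exact finite_comap_of_finite_ker p hpk g.ker hgk
  · rintro ⟨G0, hn, hfi, φ, hφs, hφk⟩
    refine ⟨G0.map f, Subgroup.Normal.map hn f hf, ?_, ?_⟩
    · constructor
      intro h0
      have hdvd : (G0 ⊔ f.ker).index ∣ G0.index := Subgroup.index_dvd_of_le le_sup_left
      have hmap : (G0.map f).index = (G0 ⊔ f.ker).index * f.range.index := G0.index_map f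
      rw [f.range_eq_top_of_surjective hf, Subgroup.index_top, mul_one, h0] at hmap
      exact hfi.index_ne_zero (Nat.eq_zero_of_zero_dvd (hmap ▸ hdvd))
    · let p : G0 →* G0.map f := f.subgroupMap G0
      have hps : Function.Surjective p := f.subgroupMap_surjective G0
      have hpk : Finite p.ker := by
        refine Finite.of_injective (fun x => (⟨x.1.1, ?_⟩ : f.ker)) ?_
        · have := x.2
          rw [MonoidHom.mem_ker] at this ⊢
          exact Subtype.ext_iff.mp this
        · intro x y hxy
          have h1 := congrArg Subtype.val hxy
          exact Subtype.ext (Subtype.ext h1)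
      -- elements of `p.ker` have finite order, hence are killed by `φ`
      have hcond : ∀ x ∈ p.ker, φ x = 1 := by
        intro x hx
        haveI : Fintype p.ker := Fintype.ofFinite p.ker
        have hx1 : (⟨x, hx⟩ : p.ker) ^ Fintype.card p.ker = 1 := pow_card_eq_one
        have hxn : x ^ Fintype.card p.ker = 1 := by
          have h2 := congrArg Subtype.val hx1
          rwa [SubgroupClass.coe_pow] at h2
        exact mul_int_torsion_free (φ x) Fintype.card_ne_zero
          (by rw [← map_pow, hxn, map_one])
      let lift := QuotientGroup.lift p.ker φ hcond
      let e : (G0 ⧸ p.ker) ≃* (G0.map f) := QuotientGroup.quotientKerEquivOfSurjective p hps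
      refine ⟨lift.comp e.symm.toMonoidHom, ?_, ?_⟩
      · intro z
        obtain ⟨x, hx⟩ := hφs z
        refine ⟨e (QuotientGroup.mk x), ?_⟩
        simp [lift]
        exact hx
      · have hliftker : Finite lift.ker := by
          have hsub : (lift.ker : Set (G0 ⧸ p.ker)) ⊆ QuotientGroup.mk '' (φ.ker : Set G0) := by
            rintro q hq
            obtain ⟨x, rfl⟩ := QuotientGroup.mk_surjective q
            refine ⟨x, ?_, rfl⟩
            have hq1 : lift (QuotientGroup.mk x) = 1 := hq
            exact hq1
          have hfin : (φ.ker : Set G0).Finite := Set.toFinite _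
          exact ((hfin.image _).subset hsub).to_subtype
        refine Finite.of_injective (fun x => (⟨e.symm x.1, ?_⟩ : lift.ker)) ?_
        · have := x.2
          rw [MonoidHom.mem_ker] at this ⊢
          simpa using this
        · intro x y hxy
          have h1 := congrArg Subtype.val hxy
          exact Subtype.ext (e.symm.injective h1)
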